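/- For every real number q with 0<q<1, every integer n≥1 and every λ∈ℂ with |λ|=1, the operators of the representation π_λ on ℓ²(ℕⁿ) satisfy: π_λ(Y_n)π_λ(Y_n)* − π_λ(Y_n)*π_λ(Y_n) = (1−q⁴)·π_λ(Y_{n+1})*π_λ(Y_{n+1}), and π_λ(Y_i)π_λ(Y_i)* − π_λ(Y_i)*π_λ(Y_i) = (1−q²)·Σ_{k=i+1}^{n+1} π_λ(Y_k)*π_λ(Y_k) for every 1≤i≤n+1 with i≠n. -/

import Mathlib

open ContinuousLinearMap

noncomputable section

abbrev lpH (n : ℕ) : Type := lp (fun _ : Fin n → ℕ => ℂ) 2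

def basisE {n : ℕ} (k : Fin n → ℕ) : lpH n := lp.single 2 k 1

/-- A `Σ_q`-family: relations (R1)-(R5). Index `i : Fin (n+1)` corresponds to `Y_{i+1}`. -/
def IsSigmaQFamily (q : ℝ) {n : ℕ} {H : Type*} [NormedAddCommGroup H]
    [InnerProductSpace ℂ H] [CompleteSpace H]
    (Y : Fin (n + 1) → H →L[ℂ] H) : Prop :=
  (∀ i j : Fin (n + 1), j < i → ¬((i : ℕ) = n ∧ (j : ℕ) + 1 = n) →
      Y i * Y j = ((q : ℂ))⁻¹ • (Y j * Y i) ∧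
      adjoint (Y i) * Y j = ((q : ℂ))⁻¹ • (Y j * adjoint (Y i))) ∧
  (∀ j : Fin (n + 1), (j : ℕ) + 1 = n →
      Y (Fin.last n) * Y j = (((q : ℂ))⁻¹ ^ 2) • (Y j * Y (Fin.last n)) ∧
      adjoint (Y (Fin.last n)) * Y j = (((q : ℂ))⁻¹ ^ 2) • (Y j * adjoint (Y (Fin.last n)))) ∧
  (∀ i : Fin (n + 1), (i : ℕ) + 1 ≠ n →
      Y i * adjoint (Y i) - adjoint (Y i) * Y i
        = ((1 - q ^ 2 : ℝ) : ℂ) • ∑ k ∈ Finset.Ioi i, adjoint (Y k) * Y k) ∧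
  (∀ i : Fin (n + 1), (i : ℕ) + 1 = n →
      Y i * adjoint (Y i) - adjoint (Y i) * Y i
        = ((1 - q ^ 4 : ℝ) : ℂ) • (adjoint (Y (Fin.last n)) * Y (Fin.last n))) ∧
  (∑ i, adjoint (Y i) * Y i = 1)

/-- The representation `π_λ` on `ℓ²(ℕⁿ)`, described by its action on the canonical
orthonormal basis. Index `i : Fin n` (via `castSucc`) corresponds to `Y_{i+1}`,
and `Fin.last n` corresponds to `Y_{n+1}`. -/
def IsPiRep (q : ℝ) {n : ℕ} (lam : ℂ) (Y : Fin (n + 1) → lpH n →L[ℂ] lpH n) : Prop :=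
  (∀ i : Fin n, (i : ℕ) + 1 < n → ∀ k : Fin n → ℕ,
      Y i.castSucc (basisE k)
        = ((q ^ (∑ j ∈ Finset.Iio i, k j) * Real.sqrt (1 - q ^ (2 * k i)) : ℝ) : ℂ)
            • basisE (Function.update k i (k i - 1))) ∧
  (∀ i : Fin n, (i : ℕ) + 1 = n → ∀ k : Fin n → ℕ,
      Y i.castSucc (basisE k)
        = ((q ^ (∑ j ∈ Finset.Iio i, k j) * Real.sqrt (1 - q ^ (4 * k i)) : ℝ) : ℂ)
            • basisE (Function.update k i (k i - 1))) ∧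
  (∀ k : Fin n → ℕ,
      Y (Fin.last n) (basisE k)
        = (lam * (q : ℂ) ^ (∑ j : Fin n, if (j : ℕ) + 1 = n then 2 * k j else k j))
            • basisE k)

/-- Irreducibility: the only closed invariant subspaces are `⊥` and `⊤`. -/
def IsIrreducibleFamily {n : ℕ} {H : Type*} [NormedAddCommGroup H]
    [InnerProductSpace ℂ H] [CompleteSpace H]
    (Y : Fin (n + 1) → H →L[ℂ] H) : Prop :=
  ∀ V : Submodule ℂ H, IsClosed (V : Set H) →
    (∀ i : Fin (n + 1), ∀ v ∈ V, Y i v ∈ V ∧ adjoint (Y i) v ∈ V) →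
    V = ⊥ ∨ V = ⊤

section AuxPi

lemma coord_eq_inner {n : ℕ} (x : lpH n) (m : Fin n → ℕ) :
    inner ℂ (basisE m) x = (x m : ℂ) := by
  rw [basisE, lp.inner_single_left]; simp

lemma basisE_apply {n : ℕ} (k m : Fin n → ℕ) :
    (basisE k : lpH n) m = if m = k then 1 else 0 := by
  rw [basisE, lp.single_apply]; split <;> simp_all

lemma lp_ext {n : ℕ} {x y : lpH n} (h : ∀ m, x m = y m) : x = y :=
  lp.ext (funext h)

lemma smul_coord {n : ℕ} (c : ℂ) (x : lpH n) (m : Fin n → ℕ) :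
    (c • x) m = c * x m := rfl

lemma adjoint_coord {n : ℕ} (A : lpH n →L[ℂ] lpH n) (k m : Fin n → ℕ) :
    (adjoint A (basisE k)) m = inner ℂ (A (basisE m)) (basisE k) := by
  rw [← coord_eq_inner, adjoint_inner_right]

lemma adjoint_diag {n : ℕ} (A : lpH n →L[ℂ] lpH n) (c : (Fin n → ℕ) → ℂ)
    (h : ∀ k, A (basisE k) = c k • basisE k) (k : Fin n → ℕ) :
    adjoint A (basisE k) = (starRingEnd ℂ) (c k) • basisE k := by
  refine lp_ext fun m => ?_
  rw [adjoint_coord, h, smul_coord, inner_smul_left, coord_eq_inner, basisE_apply]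
  by_cases hm : m = k
  · subst hm; simp
  · simp [hm, Ne.symm hm]

lemma adjoint_lower {n : ℕ} (A : lpH n →L[ℂ] lpH n) (i : Fin n) (c : (Fin n → ℕ) → ℝ)
    (h : ∀ k, A (basisE k) = (c k : ℂ) • basisE (Function.update k i (k i - 1)))
    (h0 : ∀ k, k i = 0 → c k = 0) (k : Fin n → ℕ) :
    adjoint A (basisE k)
      = ((c (Function.update k i (k i + 1)) : ℝ) : ℂ)
          • basisE (Function.update k i (k i + 1)) := by
  refine lp_ext fun m => ?_
  rw [adjoint_coord, h, smul_coord, inner_smul_left, coord_eq_inner, basisE_apply,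
    basisE_apply, Complex.conj_ofReal]
  by_cases hm : m = Function.update k i (k i + 1)
  · subst hm
    have h1 : Function.update (Function.update k i (k i + 1)) i
        (Function.update k i (k i + 1) i - 1) = k := by
      rw [Function.update_self, Nat.add_sub_cancel, Function.update_idem,
        Function.update_eq_self]
    rw [if_pos h1, if_pos rfl]
  · rw [if_neg hm, mul_zero]
    by_cases heq : Function.update m i (m i - 1) = k
    · rcases Nat.eq_zero_or_pos (m i) with h00 | hpos
      · rw [h0 m h00]
        simp
      · exfalso; apply hm
        funext j
        by_cases hj : j = i
        · subst hj
          rw [Function.update_self, ← heq, Function.update_self,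
            Nat.sub_add_cancel hpos]
        · rw [Function.update_of_ne hj, ← heq, Function.update_of_ne hj]
    · rw [if_neg heq, mul_zero]

lemma hasSum_basis {n : ℕ} (x : lpH n) :
    HasSum (fun m : Fin n → ℕ => x m • basisE m) x := by
  have := lp.hasSum_single (E := fun _ : Fin n → ℕ => ℂ) ENNReal.ofNat_ne_top x
  convert this using 2 with m
  rw [basisE, ← lp.single_smul]; simp

lemma clm_ext {n : ℕ} {f g : lpH n →L[ℂ] lpH n}
    (h : ∀ k, f (basisE k) = g (basisE k)) : f = g := by
  ext x
  have h1 : HasSum (fun m : Fin n → ℕ => f (x m • basisE m)) (f x) :=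
    (hasSum_basis x).mapL f
  have h2 : HasSum (fun m : Fin n → ℕ => g (x m • basisE m)) (g x) :=
    (hasSum_basis x).mapL g
  have : f x = g x := h1.unique (h2.congr_fun fun m => by simp only [map_smul, h])
  rw [this]

lemma sum_Iio_fin {N : ℕ} {M : Type*} [AddCommMonoid M] (i : Fin N) (G : ℕ → M) :
    ∑ j ∈ Finset.Iio i, G j.val = ∑ m ∈ Finset.range i.val, G m := by
  refine Finset.sum_nbij' (fun j => j.val)
    (fun m => ⟨m % N, Nat.mod_lt _ i.pos⟩) ?_ ?_ ?_ ?_ ?_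
  · intro a ha
    simp only [Finset.mem_Iio, Fin.lt_def] at ha
    simpa using ha
  · intro a ha
    simp only [Finset.mem_range] at ha
    have haN : a < N := ha.trans i.isLt
    simp [Finset.mem_Iio, Fin.lt_def, Nat.mod_eq_of_lt haN, ha]
  · intro a _; simp [Nat.mod_eq_of_lt a.isLt]
  · intro a ha
    simp only [Finset.mem_range] at ha
    simp [Nat.mod_eq_of_lt (ha.trans i.isLt)]
  · intro a _; rfl

lemma sum_Ioi_fin {N : ℕ} {M : Type*} [AddCommMonoid M] (i : Fin N) (G : ℕ → M) :
    ∑ j ∈ Finset.Ioi i, G j.val = ∑ m ∈ Finset.Ico (i.val + 1) N, G m := by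
  refine Finset.sum_nbij' (fun j => j.val)
    (fun m => ⟨m % N, Nat.mod_lt _ i.pos⟩) ?_ ?_ ?_ ?_ ?_
  · intro a ha
    simp only [Finset.mem_Ioi, Fin.lt_def] at ha
    simp [Finset.mem_Ico, Nat.succ_le_iff, ha, a.isLt]
  · intro a ha
    simp only [Finset.mem_Ico] at ha
    simp [Finset.mem_Ioi, Fin.lt_def, Nat.mod_eq_of_lt ha.2, Nat.lt_of_succ_le ha.1]
  · intro a _; simp [Nat.mod_eq_of_lt a.isLt]
  · intro a ha
    simp only [Finset.mem_Ico] at ha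
    simp [Nat.mod_eq_of_lt ha.2]
  · intro a _; rfl


def kap {n : ℕ} (k : Fin n → ℕ) (m : ℕ) : ℕ := if h : m < n then k ⟨m, h⟩ else 0

def Ssum {n : ℕ} (k : Fin n → ℕ) (m : ℕ) : ℕ := ∑ j ∈ Finset.range m, kap k j

def Dcoef (q : ℝ) {n : ℕ} (k : Fin n → ℕ) (m : ℕ) : ℝ :=
  if m + 1 < n then q ^ (2 * Ssum k m) * (1 - q ^ (2 * kap k m))
  else if m + 1 = n then q ^ (2 * Ssum k m) * (1 - q ^ (4 * kap k m))
  else q ^ (2 * (Ssum k n + kap k (n - 1)))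

lemma kap_coe {n : ℕ} (k : Fin n → ℕ) (j : Fin n) : kap k j.val = k j := by
  simp [kap, j.isLt]

lemma Ssum_succ {n : ℕ} (k : Fin n → ℕ) (m : ℕ) :
    Ssum k (m + 1) = Ssum k m + kap k m := Finset.sum_range_succ _ _

lemma sum_Iio_eq_Ssum {n : ℕ} (k : Fin n → ℕ) (i : Fin n) :
    ∑ j ∈ Finset.Iio i, k j = Ssum k i.val := by
  rw [Ssum, ← sum_Iio_fin i (kap k)]
  exact Finset.sum_congr rfl fun j _ => (kap_coe k j).symm

lemma Tsum_eq {n : ℕ} (hn : 1 ≤ n) (k : Fin n → ℕ) :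
    (∑ j : Fin n, if (j : ℕ) + 1 = n then 2 * k j else k j)
      = Ssum k n + kap k (n - 1) := by
  have h1 : (∑ j : Fin n, if (j : ℕ) + 1 = n then 2 * k j else k j)
      = ∑ j : Fin n, (k j + if (j : ℕ) + 1 = n then k j else 0) := by
    refine Finset.sum_congr rfl fun j _ => ?_
    split <;> omega
  rw [h1, Finset.sum_add_distrib]
  congr 1
  · rw [Ssum, ← Fin.sum_univ_eq_sum_range (kap k) n]
    exact Finset.sum_congr rfl fun j _ => (kap_coe k j).symm
  · have h2 : (∑ j : Fin n, if (j : ℕ) + 1 = n then k j else 0)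
        = ∑ j : Fin n, (if j = (⟨n - 1, by omega⟩ : Fin n) then kap k (n - 1) else 0) := by
      refine Finset.sum_congr rfl fun j _ => ?_
      by_cases hc : (j : ℕ) + 1 = n
      · rw [if_pos hc, if_pos (Fin.ext (by simp; omega)), ← kap_coe k j,
          show j.val = n - 1 by omega]
      · rw [if_neg hc, if_neg (fun h => hc (by subst h; simp; omega))]
    rw [h2, Finset.sum_ite_eq' Finset.univ]
    simp

lemma tele (q : ℝ) {n : ℕ} (k : Fin n → ℕ) (a : ℕ) (ha : a + 1 < n) :
    ∑ m ∈ Finset.Ico (a + 1) (n + 1), Dcoef q k m = q ^ (2 * Ssum k (a + 1)) := by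
  set f : ℕ → ℝ := fun m =>
    if m < n then q ^ (2 * Ssum k m) else q ^ (2 * (Ssum k n + kap k (n - 1))) with hf
  have hstep : ∀ m ∈ Finset.Ico (a + 1) n, Dcoef q k m = f m - f (m + 1) := by
    intro m hm
    simp only [Finset.mem_Ico] at hm
    rcases lt_or_eq_of_le (Nat.succ_le_of_lt hm.2) with hlt | heq
    · have : Dcoef q k m = q ^ (2 * Ssum k m) * (1 - q ^ (2 * kap k m)) :=
        if_pos hlt
      rw [this, hf]
      simp only [if_pos hm.2, if_pos (by omega : m + 1 < n), Ssum_succ]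
      ring
    · -- m + 1 = n
      have hD : Dcoef q k m = q ^ (2 * Ssum k m) * (1 - q ^ (4 * kap k m)) := by
        rw [Dcoef, if_neg (by omega), if_pos heq]
      rw [hD, hf]
      simp only [if_pos hm.2, if_neg (by omega : ¬ m + 1 < n)]
      have h4 : n - 1 = m := by omega
      have h5 := Ssum_succ k m
      rw [show m + 1 = n from heq] at h5
      rw [h5, h4]
      ring
  have hn1 : a + 1 ≤ n := le_of_lt ha
  rw [Finset.sum_Ico_succ_top (by omega), Finset.sum_congr rfl hstep]
  have hDn : Dcoef q k n = f n := by
    rw [Dcoef, if_neg (by omega), if_neg (by omega), hf]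
    simp
  have htel : ∑ m ∈ Finset.Ico (a + 1) n, (f m - f (m + 1)) = f (a + 1) - f n := by
    rw [Finset.sum_Ico_eq_sum_range]
    have h := Finset.sum_range_sub' (fun i => f (a + 1 + i)) (n - (a + 1))
    simp only [add_zero] at h
    rw [show a + 1 + (n - (a + 1)) = n by omega] at h
    exact h
  rw [hDn, htel]
  have : f (a + 1) = q ^ (2 * Ssum k (a + 1)) := if_pos ha
  rw [← this]
  ring

lemma lower_pair (q : ℝ) (hq0 : 0 < q) (hq1 : q < 1) {n : ℕ} (e : ℕ)
    (A : lpH n →L[ℂ] lpH n) (i' : Fin n)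
    (h : ∀ k : Fin n → ℕ, A (basisE k)
      = ((q ^ (∑ j ∈ Finset.Iio i', k j) * Real.sqrt (1 - q ^ (e * k i')) : ℝ) : ℂ)
          • basisE (Function.update k i' (k i' - 1))) :
    (∀ k : Fin n → ℕ, (adjoint A * A) (basisE k)
        = ((q ^ (2 * ∑ j ∈ Finset.Iio i', k j) * (1 - q ^ (e * k i')) : ℝ) : ℂ)
            • basisE k) ∧
    (∀ k : Fin n → ℕ, (A * adjoint A) (basisE k)
        = ((q ^ (2 * ∑ j ∈ Finset.Iio i', k j) * (1 - q ^ (e * (k i' + 1))) : ℝ) : ℂ)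
            • basisE k) := by
  have h0 : ∀ k : Fin n → ℕ, k i' = 0 →
      q ^ (∑ j ∈ Finset.Iio i', k j) * Real.sqrt (1 - q ^ (e * k i')) = 0 := by
    intro k hk; simp [hk]
  have hupd : ∀ (k : Fin n → ℕ) (t : ℕ),
      ∑ j ∈ Finset.Iio i', (Function.update k i' t) j = ∑ j ∈ Finset.Iio i', k j :=
    fun k t => Finset.sum_congr rfl fun j hj =>
      Function.update_of_ne (Finset.mem_Iio.mp hj).ne _ _
  have hnn : ∀ m : ℕ, 0 ≤ 1 - q ^ m := fun m =>
    sub_nonneg.mpr (pow_le_one₀ hq0.le hq1.le)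
  have hadj : ∀ k : Fin n → ℕ, adjoint A (basisE k)
      = ((q ^ (∑ j ∈ Finset.Iio i', (Function.update k i' (k i' + 1)) j)
            * Real.sqrt (1 - q ^ (e * ((Function.update k i' (k i' + 1)) i'))) : ℝ) : ℂ)
          • basisE (Function.update k i' (k i' + 1)) :=
    adjoint_lower A i'
      (fun k => q ^ (∑ j ∈ Finset.Iio i', k j) * Real.sqrt (1 - q ^ (e * k i'))) h h0
  simp only [hupd, Function.update_self] at hadj
  constructor
  · intro k
    rw [ContinuousLinearMap.mul_apply, h k, map_smul]
    by_cases hk0 : k i' = 0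
    · simp [hk0]
    · rw [hadj, smul_smul, Function.update_self, hupd,
        Nat.sub_add_cancel (Nat.pos_of_ne_zero hk0), Function.update_idem,
        Function.update_eq_self, ← Complex.ofReal_mul]
      congr 1
      rw [show (q ^ (∑ j ∈ Finset.Iio i', k j) * Real.sqrt (1 - q ^ (e * k i')))
            * (q ^ (∑ j ∈ Finset.Iio i', k j) * Real.sqrt (1 - q ^ (e * k i')))
          = (q ^ (∑ j ∈ Finset.Iio i', k j) * q ^ (∑ j ∈ Finset.Iio i', k j))
            * (Real.sqrt (1 - q ^ (e * k i')) * Real.sqrt (1 - q ^ (e * k i'))) by ring,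
        Real.mul_self_sqrt (hnn _)]
      ring
  · intro k
    rw [ContinuousLinearMap.mul_apply, hadj k, map_smul, h _, smul_smul,
      Function.update_self, hupd, Nat.add_sub_cancel, Function.update_idem,
      Function.update_eq_self, ← Complex.ofReal_mul]
    congr 1
    rw [show (q ^ (∑ j ∈ Finset.Iio i', k j) * Real.sqrt (1 - q ^ (e * (k i' + 1))))
          * (q ^ (∑ j ∈ Finset.Iio i', k j) * Real.sqrt (1 - q ^ (e * (k i' + 1))))
        = (q ^ (∑ j ∈ Finset.Iio i', k j) * q ^ (∑ j ∈ Finset.Iio i', k j))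
          * (Real.sqrt (1 - q ^ (e * (k i' + 1))) * Real.sqrt (1 - q ^ (e * (k i' + 1)))) by
          ring,
      Real.mul_self_sqrt (hnn _)]
    ring

lemma diag_pair (q : ℝ) {n : ℕ} (lam : ℂ) (hlam : ‖lam‖ = 1)
    (A : lpH n →L[ℂ] lpH n)
    (h : ∀ k : Fin n → ℕ, A (basisE k)
      = (lam * (q : ℂ) ^ (∑ j : Fin n, if (j : ℕ) + 1 = n then 2 * k j else k j))
          • basisE k) :
    (∀ k : Fin n → ℕ, (adjoint A * A) (basisE k)
        = ((q ^ (2 * ∑ j : Fin n, if (j : ℕ) + 1 = n then 2 * k j else k j) : ℝ) : ℂ)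
            • basisE k) ∧
    (∀ k : Fin n → ℕ, (A * adjoint A) (basisE k)
        = ((q ^ (2 * ∑ j : Fin n, if (j : ℕ) + 1 = n then 2 * k j else k j) : ℝ) : ℂ)
            • basisE k) := by
  have hadj := adjoint_diag A
    (fun k => lam * (q : ℂ) ^ (∑ j : Fin n, if (j : ℕ) + 1 = n then 2 * k j else k j)) h
  have hlam1 : lam * (starRingEnd ℂ) lam = 1 := by
    rw [Complex.mul_conj]
    norm_cast
    rw [Complex.normSq_eq_norm_sq, hlam]
    norm_num
  have key : ∀ T : ℕ, (lam * (q : ℂ) ^ T) * (starRingEnd ℂ) (lam * (q : ℂ) ^ T)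
      = ((q ^ (2 * T) : ℝ) : ℂ) := by
    intro T
    rw [map_mul, ← Complex.ofReal_pow, Complex.conj_ofReal]
    push_cast
    calc lam * (q : ℂ) ^ T * ((starRingEnd ℂ) lam * (q : ℂ) ^ T)
        = (lam * (starRingEnd ℂ) lam) * ((q : ℂ) ^ T * (q : ℂ) ^ T) := by ring
      _ = (q : ℂ) ^ (2 * T) := by rw [hlam1, one_mul, two_mul, pow_add]
  have hadj' : ∀ k : Fin n → ℕ, adjoint A (basisE k)
      = (starRingEnd ℂ)
          (lam * (q : ℂ) ^ (∑ j : Fin n, if (j : ℕ) + 1 = n then 2 * k j else k j))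
          • basisE k := hadj
  have key' : ∀ T : ℕ, (starRingEnd ℂ) (lam * (q : ℂ) ^ T) * (lam * (q : ℂ) ^ T)
      = ((q ^ (2 * T) : ℝ) : ℂ) := fun T => by rw [mul_comm]; exact key T
  constructor
  · intro k
    rw [ContinuousLinearMap.mul_apply, h k, map_smul, hadj', smul_smul, key]
  · intro k
    rw [ContinuousLinearMap.mul_apply, hadj' k, map_smul, h k, smul_smul, key']

end AuxPi

/-- The operators of `π_λ` satisfy the commutation relations (R3) and (R4). -/
theorem piRep_commutators (q : ℝ) (hq0 : 0 < q) (hq1 : q < 1) (n : ℕ) (hn : 1 ≤ n)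
    (lam : ℂ) (hlam : ‖lam‖ = 1) (Y : Fin (n + 1) → lpH n →L[ℂ] lpH n)
    (hY : IsPiRep q lam Y) :
    (∀ i : Fin (n + 1), (i : ℕ) + 1 = n →
        Y i * adjoint (Y i) - adjoint (Y i) * Y i
          = ((1 - q ^ 4 : ℝ) : ℂ) • (adjoint (Y (Fin.last n)) * Y (Fin.last n))) ∧
    (∀ i : Fin (n + 1), (i : ℕ) + 1 ≠ n →
        Y i * adjoint (Y i) - adjoint (Y i) * Y i
          = ((1 - q ^ 2 : ℝ) : ℂ) • ∑ k ∈ Finset.Ioi i, adjoint (Y k) * Y k) := by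
  obtain ⟨hY1, hY2, hY3⟩ := hY
  have term_coef : ∀ (k : Fin n → ℕ) (j : Fin (n + 1)),
      (adjoint (Y j) * Y j) (basisE k) = ((Dcoef q k j.val : ℝ) : ℂ) • basisE k := by
    intro k j
    rcases Fin.eq_castSucc_or_eq_last j with ⟨j', rfl⟩ | rfl
    · have hjn : j'.val + 1 ≤ n := j'.isLt
      rcases lt_or_eq_of_le hjn with hlt | heqn
      · rw [(lower_pair q hq0 hq1 2 (Y j'.castSucc) j' (hY1 j' hlt)).1 k]
        congr 2
        rw [Fin.coe_castSucc, Dcoef, if_pos hlt, sum_Iio_eq_Ssum, kap_coe]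
      · rw [(lower_pair q hq0 hq1 4 (Y j'.castSucc) j' (hY2 j' heqn)).1 k]
        congr 2
        rw [Fin.coe_castSucc, Dcoef, if_neg (by omega), if_pos heqn,
          sum_Iio_eq_Ssum, kap_coe]
    · rw [(diag_pair q lam hlam (Y (Fin.last n)) hY3).1 k]
      congr 2
      rw [Fin.val_last, Dcoef, if_neg (by omega), if_neg (by omega), Tsum_eq hn k]
  constructor
  · -- case (i:ℕ) + 1 = n
    intro i hi
    have hilt : (i : ℕ) < n := by omega
    have hieq : i = (⟨(i : ℕ), hilt⟩ : Fin n).castSucc := Fin.ext rfl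
    set i' : Fin n := ⟨(i : ℕ), hilt⟩ with hi'def
    have hi' : (i' : ℕ) + 1 = n := hi
    obtain ⟨P4, Q4⟩ := lower_pair q hq0 hq1 4 (Y i'.castSucc) i' (hY2 i' hi')
    have Pl := (diag_pair q lam hlam (Y (Fin.last n)) hY3).1
    rw [hieq]
    apply clm_ext; intro k
    rw [ContinuousLinearMap.sub_apply, ContinuousLinearMap.mul_apply,
      ContinuousLinearMap.mul_apply, ← ContinuousLinearMap.mul_apply (Y i'.castSucc),
      ← ContinuousLinearMap.mul_apply (adjoint (Y i'.castSucc)), Q4 k, P4 k,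
      ContinuousLinearMap.smul_apply, Pl k, smul_smul, ← sub_smul]
    congr 1
    rw [← Complex.ofReal_sub]
    have hT : (∑ j : Fin n, if (j : ℕ) + 1 = n then 2 * k j else k j)
        = (∑ j ∈ Finset.Iio i', k j) + 2 * k i' := by
      rw [Tsum_eq hn k, sum_Iio_eq_Ssum]
      have e1 : (i' : ℕ) = n - 1 := by omega
      have e2 : kap k (n - 1) = k i' := by rw [← e1, kap_coe]
      have e3 := Ssum_succ k (i' : ℕ)
      rw [show (i' : ℕ) + 1 = n by omega] at e3
      rw [e3, e2, kap_coe]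
      ring
    rw [hT]
    have : ((1 - q ^ 4 : ℝ) : ℂ) * ((q ^ (2 * ((∑ j ∈ Finset.Iio i', k j) + 2 * k i')) : ℝ) : ℂ)
        = (((1 - q ^ 4) * q ^ (2 * ((∑ j ∈ Finset.Iio i', k j) + 2 * k i')) : ℝ) : ℂ) := by
      push_cast; ring
    rw [this]
    congr 1
    ring
  · -- case (i:ℕ) + 1 ≠ n
    intro i hi
    rcases Fin.eq_castSucc_or_eq_last i with ⟨i', rfl⟩ | rfl
    · have hlt : (i' : ℕ) + 1 < n :=
        lt_of_le_of_ne i'.isLt (by simpa using hi)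
      obtain ⟨P2, Q2⟩ := lower_pair q hq0 hq1 2 (Y i'.castSucc) i' (hY1 i' hlt)
      apply clm_ext; intro k
      rw [ContinuousLinearMap.sub_apply, ContinuousLinearMap.smul_apply,
        ContinuousLinearMap.sum_apply, Q2 k, P2 k]
      rw [Finset.sum_congr rfl (fun j _ => term_coef k j), ← Finset.sum_smul,
        smul_smul, ← sub_smul]
      congr 1
      have hsum : ∑ j ∈ Finset.Ioi (Fin.castSucc i'), Dcoef q k (j : ℕ)
          = q ^ (2 * Ssum k ((i' : ℕ) + 1)) := by
        rw [sum_Ioi_fin (Fin.castSucc i') (Dcoef q k), Fin.coe_castSucc]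
        exact tele q k (i' : ℕ) hlt
      have hc : (∑ j ∈ Finset.Ioi (Fin.castSucc i'), ((Dcoef q k (j : ℕ) : ℝ) : ℂ))
          = ((q ^ (2 * Ssum k ((i' : ℕ) + 1)) : ℝ) : ℂ) := by
        rw [← hsum]; push_cast; rfl
      rw [hc, ← Complex.ofReal_sub]
      have : ((1 - q ^ 2 : ℝ) : ℂ) * ((q ^ (2 * Ssum k ((i' : ℕ) + 1)) : ℝ) : ℂ)
          = (((1 - q ^ 2) * q ^ (2 * Ssum k ((i' : ℕ) + 1)) : ℝ) : ℂ) := by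
        push_cast; ring
      rw [this]
      congr 1
      rw [Ssum_succ, ← sum_Iio_eq_Ssum, kap_coe]
      ring
    · have hIoi : Finset.Ioi (Fin.last n) = (∅ : Finset (Fin (n + 1))) := by
        ext j
        simp only [Finset.mem_Ioi, Finset.notMem_empty, iff_false]
        exact not_lt.mpr (Fin.le_last j)
      rw [hIoi, Finset.sum_empty, smul_zero]
      have hd := diag_pair q lam hlam (Y (Fin.last n)) hY3
      apply clm_ext; intro k
      rw [ContinuousLinearMap.sub_apply, hd.2 k, hd.1 k, sub_self,
        ContinuousLinearMap.zero_apply]
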